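/- Let A be a Noetherian integral domain and let I ⊆ J be ideals of A with I ≠ 0. If there exist natural numbers s and t such that I^{s+1} · Jᵗ = Iˢ · J^{t+1} (as ideals of A), then I is a reduction of J, i.e. there exists n with I · Jⁿ = J^{n+1}. (Claim in the proof of part (3) of the five-part Lemma in Section 4.) -/

import Mathlib

open Polynomial

/-- Sums of ideals bounded by `C` are bounded by `C`. -/
private lemma sum_ideal_le {A : Type*} [CommRing A] {ι : Type*} (s : Finset ι)
    (f : ι → Ideal A) (C : Ideal A) (hf : ∀ i ∈ s, f i ≤ C) :
    (∑ i ∈ s, f i) ≤ C := by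
  classical
  induction s using Finset.induction_on with
  | empty => simp
  | insert _ _ hb ih =>
    rw [Finset.sum_insert hb, Submodule.add_eq_sup]
    exact sup_le (hf _ (Finset.mem_insert_self _ _))
      (ih fun i hi => hf i (Finset.mem_insert_of_mem hi))

/-- Binomial-type inequality for ideals. -/
private lemma ideal_add_pow_le {A : Type*} [CommRing A] (P Q : Ideal A) :
    ∀ n : ℕ, (P + Q) ^ n ≤ ∑ j ∈ Finset.range (n + 1), P ^ j * Q ^ (n - j)
  | 0 => by simp
  | n + 1 => by
    have ih := ideal_add_pow_le P Q n
    calc (P + Q) ^ (n + 1) = (P + Q) ^ n * (P + Q) := by rw [pow_succ]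
      _ ≤ (∑ j ∈ Finset.range (n + 1), P ^ j * Q ^ (n - j)) * (P + Q) :=
          Ideal.mul_mono_left ih
      _ = ∑ j ∈ Finset.range (n + 1),
            (P ^ (j + 1) * Q ^ (n - j) + P ^ j * Q ^ (n - j) * Q) := by
          rw [Finset.sum_mul]; apply Finset.sum_congr rfl; intro j _; ring
      _ ≤ ∑ j ∈ Finset.range (n + 2), P ^ j * Q ^ (n + 1 - j) := by
          apply sum_ideal_le
          intro j hj
          rw [Finset.mem_range] at hj
          rw [Submodule.add_eq_sup]
          apply sup_le
          · have e : n + 1 - (j + 1) = n - j := Nat.succ_sub_succ n j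
            have hmem : j + 1 ∈ Finset.range (n + 2) := Finset.mem_range.mpr (by omega)
            have hle := Finset.single_le_sum (f := fun k => P ^ k * Q ^ (n + 1 - k))
              (fun _ _ => bot_le) hmem
            simpa only [e] using hle
          · have e : P ^ j * Q ^ (n - j) * Q = P ^ j * Q ^ (n + 1 - j) := by
              rw [mul_assoc, ← pow_succ]
              congr 2
              omega
            rw [e]
            exact Finset.single_le_sum (f := fun k => P ^ k * Q ^ (n + 1 - k))
              (fun _ _ => bot_le) (Finset.mem_range.mpr (by omega))

/-- Combining two "eventually absorbed" ideals. -/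
private lemma ideal_add_absorb {A : Type*} [CommRing A] {I J P Q : Ideal A}
    (hIJ : I ≤ J) (hP : P ≤ J) (hQ : Q ≤ J) {c d : ℕ}
    (hPc : P ^ (c + 1) ≤ I * J ^ c) (hQd : Q ^ (d + 1) ≤ I * J ^ d) :
    (P + Q) ^ (c + d + 1) ≤ I * J ^ (c + d) := by
  refine (ideal_add_pow_le P Q (c + d + 1)).trans ?_
  apply sum_ideal_le
  intro j hj
  rw [Finset.mem_range] at hj
  by_cases hjc : c + 1 ≤ j
  · have e1 : j = (c + 1) + (j - (c + 1)) := by omega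
    have e2 : c + (j - (c + 1)) + (c + d + 1 - j) = c + d := by omega
    calc P ^ j * Q ^ (c + d + 1 - j)
        = P ^ (c + 1) * P ^ (j - (c + 1)) * Q ^ (c + d + 1 - j) := by
          rw [← pow_add, ← e1]
      _ ≤ (I * J ^ c) * J ^ (j - (c + 1)) * J ^ (c + d + 1 - j) :=
          Ideal.mul_mono (Ideal.mul_mono hPc (Ideal.pow_right_mono hP _))
            (Ideal.pow_right_mono hQ _)
      _ = I * J ^ (c + (j - (c + 1)) + (c + d + 1 - j)) := by
          rw [pow_add, pow_add]; ring
      _ = I * J ^ (c + d) := by rw [e2]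
  · have e1 : c + d + 1 - j = (d + 1) + (c - j) := by omega
    have e2 : j + (d + (c - j)) = c + d := by omega
    calc P ^ j * Q ^ (c + d + 1 - j)
        = P ^ j * (Q ^ (d + 1) * Q ^ (c - j)) := by rw [← pow_add, ← e1]
      _ ≤ J ^ j * ((I * J ^ d) * J ^ (c - j)) :=
          Ideal.mul_mono (Ideal.pow_right_mono hP _)
            (Ideal.mul_mono hQd (Ideal.pow_right_mono hQ _))
      _ = I * J ^ (j + (d + (c - j))) := by rw [pow_add, pow_add]; ring
      _ = I * J ^ (c + d) := by rw [e2]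

/-- Every element of `J` is "integral over `I`": some power lands in `I * J ^ d`. -/
private lemma elem_absorb {A : Type*} [CommRing A] [IsDomain A] [IsNoetherianRing A]
    (I J : Ideal A) (hIJ : I ≤ J) (hI : I ≠ ⊥) (s t : ℕ)
    (h : I ^ (s + 1) * J ^ t = I ^ s * J ^ (t + 1)) {x : A} (hx : x ∈ J) :
    ∃ d : ℕ, x ^ (d + 1) ∈ I * J ^ d := by
  set M : Ideal A := I ^ s * J ^ t with hM
  have hJ : J ≠ ⊥ := fun hJ => hI (le_bot_iff.mp (hJ ▸ hIJ))
  have hpow : ∀ (K : Ideal A), K ≠ ⊥ → ∀ n : ℕ, K ^ n ≠ ⊥ := by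
    intro K hK n
    induction n with
    | zero =>
      intro hc
      rw [pow_zero, Ideal.one_eq_top] at hc
      have h1 : (1 : A) ∈ (⊥ : Ideal A) := hc ▸ Submodule.mem_top
      exact one_ne_zero ((Submodule.mem_bot A).mp h1)
    | succ n ih =>
      rw [pow_succ]
      intro hc
      rcases Ideal.mul_eq_bot.mp hc with h1 | h1
      · exact ih h1
      · exact hK h1
  have hMne : M ≠ ⊥ := by
    rw [hM, Ne, Ideal.mul_eq_bot, not_or]
    exact ⟨hpow I hI s, hpow J hJ t⟩
  have hJM : J * M = I * M := by
    have e1 : J * M = I ^ s * J ^ (t + 1) := by rw [hM]; ring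
    have e2 : I * M = I ^ (s + 1) * J ^ t := by rw [hM]; ring
    rw [e1, e2, h]
  haveI : Module.Finite A ↥M := Module.Finite.iff_fg.mpr (IsNoetherian.noetherian M)
  set f : Module.End A ↥M := Algebra.lsmul A A ↥M x with hf
  have hrange : LinearMap.range f ≤ I • (⊤ : Submodule A ↥M) := by
    rintro _ ⟨m, rfl⟩
    rw [Submodule.mem_smul_top_iff]
    have hmem : (x : A) * (m : A) ∈ J * M := Ideal.mul_mem_mul hx m.2
    rw [hJM] at hmem
    rw [Ideal.smul_eq_mul]
    exact hmem
  obtain ⟨p, hmonic, -, hcoeff, heval⟩ :=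
    LinearMap.exists_monic_and_coeff_mem_pow_and_aeval_eq_zero_of_range_le_smul
      A f I hrange
  -- p(x) kills M, hence is zero
  obtain ⟨m₀, hm₀M, hm₀⟩ := Submodule.exists_mem_ne_zero_of_ne_bot hMne
  have hev0 : Polynomial.aeval x p = 0 := by
    have hz : (Algebra.lsmul A A ↥M) (Polynomial.aeval x p) = 0 := by
      rw [← Polynomial.aeval_algHom_apply, ← hf, heval]
    have happ := congrArg (fun g : Module.End A ↥M => (g ⟨m₀, hm₀M⟩ : A)) hz
    simp only [Algebra.lsmul_coe, LinearMap.zero_apply, ZeroMemClass.coe_zero,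
      SetLike.val_smul, smul_eq_mul] at happ
    exact (mul_eq_zero.mp happ).resolve_right hm₀
  have hd1 : p.natDegree ≠ 0 := by
    intro h0
    have hp1 : p = 1 := (hmonic.natDegree_eq_zero).mp h0
    rw [hp1] at hev0
    simp at hev0
  obtain ⟨d', hD⟩ : ∃ d', p.natDegree = d' + 1 := ⟨p.natDegree - 1, by omega⟩
  refine ⟨d', ?_⟩
  have hsum : (∑ k ∈ Finset.range (d' + 1), p.coeff k * x ^ k) + x ^ (d' + 1) = 0 := by
    have := Polynomial.aeval_eq_sum_range (p := p) x
    rw [hev0] at this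
    rw [hD, Finset.sum_range_succ] at this
    have hlead : p.coeff (d' + 1) = 1 := by
      have := hmonic.coeff_natDegree
      rwa [hD] at this
    rw [hlead] at this
    simp only [smul_eq_mul, one_mul] at this
    exact this.symm
  have hxd : x ^ (d' + 1) = -∑ k ∈ Finset.range (d' + 1), p.coeff k * x ^ k :=
    eq_neg_of_add_eq_zero_right hsum
  rw [hxd]
  apply neg_mem
  apply Ideal.sum_mem
  intro k hk
  rw [Finset.mem_range] at hk
  have hck : p.coeff k ∈ I ^ (d' + 1 - k) := by
    have := hcoeff k
    rwa [hD] at this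
  have hle : I ^ (d' + 1 - k) ≤ I * J ^ (d' - k) := by
    calc I ^ (d' + 1 - k) = I * I ^ (d' - k) := by rw [← pow_succ']; congr 1; omega
      _ ≤ I * J ^ (d' - k) := Ideal.mul_mono_right (Ideal.pow_right_mono hIJ _)
  have hmem : p.coeff k * x ^ k ∈ (I * J ^ (d' - k)) * J ^ k :=
    Ideal.mul_mem_mul (hle hck) (Ideal.pow_mem_pow hx k)
  have heq : (I * J ^ (d' - k)) * J ^ k = I * J ^ d' := by
    rw [mul_assoc, ← pow_add]
    congr 2
    omega
  rwa [heq] at hmem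

theorem stmt_5 {A : Type*} [CommRing A] [IsDomain A] [IsNoetherianRing A]
    (I J : Ideal A) (hIJ : I ≤ J) (hI : I ≠ ⊥)
    (h : ∃ s t : ℕ, I ^ (s + 1) * J ^ t = I ^ s * J ^ (t + 1)) :
    ∃ n : ℕ, I * J ^ n = J ^ (n + 1) := by
  classical
  obtain ⟨s, t, h⟩ := h
  -- J is finitely generated
  obtain ⟨S, hS⟩ := (isNoetherianRing_iff_ideal_fg A).mp ‹_› J
  -- by induction on finsets: any finitely generated subideal of J is eventually absorbed
  have key : ∀ (u : Finset A), (↑u : Set A) ⊆ J →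
      ∃ m : ℕ, (Ideal.span (↑u : Set A)) ^ (m + 1) ≤ I * J ^ m := by
    intro u
    induction u using Finset.induction_on with
    | empty => intro _; exact ⟨0, by simp⟩
    | @insert a u ha ih =>
      intro hsub
      have haJ : a ∈ J := hsub (Finset.mem_insert_self a u)
      have hsub' : (↑u : Set A) ⊆ J := fun y hy => hsub (Finset.mem_insert_of_mem hy)
      obtain ⟨d, hd⟩ := ih hsub'
      obtain ⟨c, hc⟩ := elem_absorb I J hIJ hI s t h haJ
      have hspan : Ideal.span (↑(insert a u) : Set A)
          = Ideal.span {a} + Ideal.span (↑u : Set A) := by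
        rw [Finset.coe_insert, Ideal.span_insert, Submodule.add_eq_sup]
      have hPle : Ideal.span {a} ≤ J := by
        rw [Ideal.span_le]; simpa using haJ
      have hQle : Ideal.span (↑u : Set A) ≤ J := by rwa [Ideal.span_le]
      have hPc : (Ideal.span {a}) ^ (c + 1) ≤ I * J ^ c := by
        rw [Ideal.span_singleton_pow, Ideal.span_le]
        simpa using hc
      refine ⟨c + d, ?_⟩
      rw [hspan]
      exact ideal_add_absorb hIJ hPle hQle hPc hd
  obtain ⟨m, hm⟩ := key S (by rw [← Ideal.span_le, hS])
  rw [hS] at hm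
  refine ⟨m, le_antisymm ?_ hm⟩
  calc I * J ^ m ≤ J * J ^ m := Ideal.mul_mono_left hIJ
    _ = J ^ (m + 1) := by rw [← pow_succ']
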